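/- Let G be a finite index set, let τ > 0, b ≥ 0, c ≥ 0, and let Sⁿ, Iⁿ, Rⁿ, T : G → ℝ satisfy Sⁿ(g) ≥ 0, Iⁿ(g) ≥ 0, Rⁿ(g) ≥ 0 and T(g) ≥ 0 for all g ∈ G. Define S^{n+1}(g) = Sⁿ(g) − τ·Sⁿ(g)·T(g) − c·τ·Sⁿ(g), I^{n+1}(g) = Iⁿ(g) + τ·Sⁿ(g)·T(g) − b·τ·Iⁿ(g), R^{n+1}(g) = Rⁿ(g) + b·τ·Iⁿ(g) + c·τ·Sⁿ(g). If τ·(T(g) + c) ≤ 1 for every g ∈ G and τ·b ≤ 1, then for every g ∈ G: S^{n+1}(g) ≥ 0, I^{n+1}(g) ≥ 0, R^{n+1}(g) ≥ 0, S^{n+1}(g) ≤ Sⁿ(g), and R^{n+1}(g) ≥ Rⁿ(g). -/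
import Mathlib

theorem stmt_9 {G : Type*} [Fintype G] (τ b c : ℝ)
    (hτ : 0 < τ) (hb : 0 ≤ b) (hc : 0 ≤ c)
    (S I R T S' I' R' : G → ℝ)
    (hSnn : ∀ g, 0 ≤ S g) (hInn : ∀ g, 0 ≤ I g) (hRnn : ∀ g, 0 ≤ R g)
    (hTnn : ∀ g, 0 ≤ T g)
    (hS' : ∀ g, S' g = S g - τ * S g * T g - c * τ * S g)
    (hI' : ∀ g, I' g = I g + τ * S g * T g - b * τ * I g)
    (hR' : ∀ g, R' g = R g + b * τ * I g + c * τ * S g)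
    (hcond : ∀ g, τ * (T g + c) ≤ 1) (hcondb : τ * b ≤ 1) :
    ∀ g, 0 ≤ S' g ∧ 0 ≤ I' g ∧ 0 ≤ R' g ∧ S' g ≤ S g ∧ R g ≤ R' g := by
  intro g
  have h1 := hSnn g; have h2 := hInn g; have h3 := hRnn g; have h4 := hTnn g
  have h5 := hcond g
  have hST : 0 ≤ τ * S g * T g := by positivity
  have hcS : 0 ≤ c * τ * S g := by positivity
  have hbI : 0 ≤ b * τ * I g := by positivity
  refine ⟨?_, ?_, ?_, ?_, ?_⟩
  · rw [hS' g]
    have : S g * (τ * (T g + c)) ≤ S g * 1 := mul_le_mul_of_nonneg_left h5 h1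
    nlinarith
  · rw [hI' g]
    have : I g * (τ * b) ≤ I g * 1 := mul_le_mul_of_nonneg_left hcondb h2
    nlinarith
  · rw [hR' g]; linarith
  · rw [hS' g]; linarith
  · rw [hR' g]; linarith
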